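/- Let v be a word over the alphabet {a,b,c} that does not end with the letter a. If the word cva (the concatenation of c, v, and a) avoids the words bba, bbb, cba, and cbb as blocks of consecutive letters, then v matches the regular expression (c ∪ bc ∪ a⁺b ∪ a⁺c)*. -/

import Mathlib

/-- The three-letter alphabet `{a, b, c}`. -/
inductive ABC : Type
  | a : ABC
  | b : ABC
  | c : ABC
  deriving DecidableEq, Repr

open ABC

/-- Words matching one of the alternatives `c`, `bc`, `a⁺b`, `a⁺c` of the regular
expression `(c ∪ bc ∪ a⁺b ∪ a⁺c)`. -/
def Atom (u : List ABC) : Prop :=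
  u = [c] ∨ u = [b, c] ∨
    ∃ i : ℕ, 1 ≤ i ∧ (u = List.replicate i a ++ [b] ∨ u = List.replicate i a ++ [c])

/-- Membership in `W_n`: words of length `n` of the form `a^i c u a c^j` (with `i, j ≥ 0`)
avoiding the subwords (i.e. blocks of consecutive letters) `bba`, `bbb`, `cba`, `cbb`. -/
def Wmem (n : ℕ) (w : List ABC) : Prop :=
  w.length = n ∧
  (∃ (i j : ℕ) (u : List ABC),
      w = List.replicate i a ++ [c] ++ u ++ [a] ++ List.replicate j c) ∧
  ¬ [b, b, a] <:+: w ∧ ¬ [b, b, b] <:+: w ∧ ¬ [c, b, a] <:+: w ∧ ¬ [c, b, b] <:+: w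

private lemma nin {p s w : List ABC} (h : ¬ p <:+: w) (hs : s <:+: w) : ¬ p <:+: s :=
  fun hp => h (hp.trans hs)

private lemma dropWhile_head_false {p : ABC → Bool} {l : List ABC} {x : ABC} {r : List ABC}
    (h : l.dropWhile p = x :: r) : p x = false := by
  induction l with
  | nil => simp at h
  | cons y t ih =>
    rw [List.dropWhile_cons] at h
    by_cases hy : p y
    · simp [hy] at h; exact ih h
    · simp [hy] at h
      rw [← h.1]
      simpa using hy

private lemma getLast?_ne_of {u w v : List ABC} (hv : v = u ++ w)
    (h : v.getLast? ≠ some a) : w.getLast? ≠ some a := by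
  rcases w with _ | ⟨z, r⟩
  · simp
  · rw [hv, List.getLast?_append_of_ne_nil _ (List.cons_ne_nil z r)] at h
    exact h

private lemma aux : ∀ (n : ℕ) (v : List ABC), v.length ≤ n → v.getLast? ≠ some a →
    ¬ [b, b, a] <:+: ([c] ++ v ++ [a]) → ¬ [b, b, b] <:+: ([c] ++ v ++ [a]) →
    ¬ [c, b, a] <:+: ([c] ++ v ++ [a]) → ¬ [c, b, b] <:+: ([c] ++ v ++ [a]) →
    ∃ L : List (List ABC), (∀ u ∈ L, Atom u) ∧ v = L.flatten := by
  intro n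
  induction n with
  | zero =>
    intro v hlen _ _ _ _ _
    have hve : v = [] := List.length_eq_zero_iff.mp (Nat.le_zero.mp hlen)
    exact ⟨[], by simp, by simp [hve]⟩
  | succ n ih =>
    intro v hlen hv h1 h2 h3 h4
    have hv' : v.takeWhile (· == a) ++ v.dropWhile (· == a) = v :=
      List.takeWhile_append_dropWhile
    obtain ⟨i, hti⟩ : ∃ i, v.takeWhile (· == a) = List.replicate i a :=
      ⟨_, List.eq_replicate_iff.mpr ⟨rfl, fun x hx => by simpa using List.mem_takeWhile_imp hx⟩⟩
    rcases hD : v.dropWhile (· == a) with _ | ⟨x, rest⟩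
    · -- v is a block of a's; must be empty
      have hvrep : v = List.replicate i a := by rw [← hv', hD, hti]; simp
      cases i with
      | zero => exact ⟨[], by simp, by simp [hvrep]⟩
      | succ k =>
        exfalso
        apply hv
        rw [hvrep, List.replicate_succ']
        simp
    · have hxa : x ≠ a := by simpa using dropWhile_head_false hD
      have hvsplit : v = List.replicate i a ++ x :: rest := by rw [← hv', hD, hti]
      have hlr : rest.length ≤ n := by
        rw [hvsplit] at hlen; simp at hlen; omega
      have hSuf : rest ++ [a] <:+: ([c] ++ v ++ [a]) :=
        ⟨[c] ++ List.replicate i a ++ [x], [], by simp [hvsplit]⟩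
      cases x with
      | a => exact absurd rfl hxa
      | c =>
        -- atom a^i c (or just c)
        have hrl : rest.getLast? ≠ some a :=
          getLast?_ne_of (u := List.replicate i a ++ [c]) (by simp [hvsplit]) hv
        have hSuf2 : [c] ++ rest ++ [a] <:+: ([c] ++ v ++ [a]) :=
          ⟨[c] ++ List.replicate i a, [], by simp [hvsplit]⟩
        obtain ⟨L, hL, hLf⟩ := ih rest hlr hrl (nin h1 hSuf2) (nin h2 hSuf2)
          (nin h3 hSuf2) (nin h4 hSuf2)
        refine ⟨(List.replicate i a ++ [c]) :: L, ?_, ?_⟩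
        · intro u hu'; rcases List.mem_cons.mp hu' with rfl | hu
          · rcases Nat.eq_zero_or_pos i with hi | hi
            · left; simp [hi]
            · right; right; exact ⟨i, hi, Or.inr rfl⟩
          · exact hL u hu
        · simp [hvsplit, hLf]
      | b =>
        rcases Nat.eq_zero_or_pos i with hi | hi
        · -- v = b :: rest, so rest must start with c
          subst hi
          simp only [List.replicate_zero, List.nil_append] at hvsplit
          rcases rest with _ | ⟨y, rest2⟩
          · exact absurd ⟨[], [], by simp [hvsplit]⟩ h3
          cases y with
          | a => exact absurd ⟨[], rest2 ++ [a], by simp [hvsplit]⟩ h3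
          | b => exact absurd ⟨[], rest2 ++ [a], by simp [hvsplit]⟩ h4
          | c =>
            have hrl : rest2.getLast? ≠ some a :=
              getLast?_ne_of (u := [b, c]) (by simp [hvsplit]) hv
            have hlr2 : rest2.length ≤ n := by
              rw [hvsplit] at hlen; simp at hlen; omega
            have hSuf3 : [c] ++ rest2 ++ [a] <:+: ([c] ++ v ++ [a]) :=
              ⟨[c, b], [], by simp [hvsplit]⟩
            obtain ⟨L, hL, hLf⟩ := ih rest2 hlr2 hrl (nin h1 hSuf3) (nin h2 hSuf3)
              (nin h3 hSuf3) (nin h4 hSuf3)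
            refine ⟨[b, c] :: L, ?_, ?_⟩
            · intro u hu'; rcases List.mem_cons.mp hu' with rfl | hu
              · right; left; rfl
              · exact hL u hu
            · simp [hvsplit, hLf]
        · -- atom a^i b with i ≥ 1
          have hrl : rest.getLast? ≠ some a :=
            getLast?_ne_of (u := List.replicate i a ++ [b]) (by simp [hvsplit]) hv
          have c1 : ¬ [b, b, a] <:+: ([c] ++ rest ++ [a]) := by
            intro hinf
            rcases List.infix_cons_iff.mp hinf with hp | hinf'
            · obtain ⟨s, hs⟩ := hp; simp at hs
            · exact h1 (hinf'.trans hSuf)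
          have c2 : ¬ [b, b, b] <:+: ([c] ++ rest ++ [a]) := by
            intro hinf
            rcases List.infix_cons_iff.mp hinf with hp | hinf'
            · obtain ⟨s, hs⟩ := hp; simp at hs
            · exact h2 (hinf'.trans hSuf)
          have c3 : ¬ [c, b, a] <:+: ([c] ++ rest ++ [a]) := by
            intro hinf
            rcases List.infix_cons_iff.mp hinf with hp | hinf'
            · obtain ⟨s, hs⟩ := hp
              have hr : rest ++ [a] = b :: a :: s := by simpa using hs.symm
              exact h1 ⟨[c] ++ List.replicate i a, s, by
                simp only [hvsplit]; simp [hr]⟩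
            · exact h3 (hinf'.trans hSuf)
          have c4 : ¬ [c, b, b] <:+: ([c] ++ rest ++ [a]) := by
            intro hinf
            rcases List.infix_cons_iff.mp hinf with hp | hinf'
            · obtain ⟨s, hs⟩ := hp
              have hr : rest ++ [a] = b :: b :: s := by simpa using hs.symm
              exact h2 ⟨[c] ++ List.replicate i a, s, by
                simp only [hvsplit]; simp [hr]⟩
            · exact h4 (hinf'.trans hSuf)
          obtain ⟨L, hL, hLf⟩ := ih rest hlr hrl c1 c2 c3 c4
          refine ⟨(List.replicate i a ++ [b]) :: L, ?_, ?_⟩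
          · intro u hu'; rcases List.mem_cons.mp hu' with rfl | hu
            · right; right; exact ⟨i, hi, Or.inl rfl⟩
            · exact hL u hu
          · simp [hvsplit, hLf]

/-- **Lemma 11 (Troyka–Zhuang).** Let `v` be a word over `{a,b,c}` not ending with `a`.
If `cva` avoids the subwords `bba`, `bbb`, `cba`, `cbb`, then `v` matches the regular
expression `(c ∪ bc ∪ a⁺b ∪ a⁺c)*`. -/
theorem stmt14 (v : List ABC) (hv : v.getLast? ≠ some a)
    (h1 : ¬ [b, b, a] <:+: ([c] ++ v ++ [a]))
    (h2 : ¬ [b, b, b] <:+: ([c] ++ v ++ [a]))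
    (h3 : ¬ [c, b, a] <:+: ([c] ++ v ++ [a]))
    (h4 : ¬ [c, b, b] <:+: ([c] ++ v ++ [a])) :
    ∃ L : List (List ABC), (∀ u ∈ L, Atom u) ∧ v = L.flatten :=
  aux v.length v le_rfl hv h1 h2 h3 h4
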